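/- Let H be a complex vector space, let J : H → H be a bijective conjugate-linear map, let γ, D : H → H be complex-linear maps, and let ε, ε', ε'' ∈ {1, −1}. Assume γ ∘ γ = id_H, D ∘ γ = −γ ∘ D, J ∘ J = ε·id_H, D ∘ J = ε'·(J ∘ D), and J ∘ γ = ε''·(γ ∘ J). Then J' := J ∘ γ is a bijective conjugate-linear map satisfying J' ∘ J' = (ε·ε'')·id_H, D ∘ J' = (−ε')·(J' ∘ D), and J' ∘ γ = ε''·(γ ∘ J'). (This is the passage from the real structure J with KO-signs (ε, ε', ε'') to the real structure Jγ with KO-signs (ε·ε'', −ε', ε'').) -/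
import Mathlib


/-- Passage from the real structure `J` with KO-signs `(ε, ε', ε'')` to
the real structure `J' = J ∘ γ` with KO-signs `(ε·ε'', −ε', ε'')`. -/
theorem real_structure_gamma_twist
    {H : Type*} [AddCommGroup H] [Module ℂ H]
    (J : H → H) (γ D : H →ₗ[ℂ] H) (ε ε' ε'' : ℂ)
    (hε : ε = 1 ∨ ε = -1) (hε' : ε' = 1 ∨ ε' = -1) (hε'' : ε'' = 1 ∨ ε'' = -1)
    (hJbij : Function.Bijective J)
    (hJadd : ∀ x y : H, J (x + y) = J x + J y)
    (hJconj : ∀ (c : ℂ) (x : H), J (c • x) = (starRingEnd ℂ) c • J x)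
    (hγγ : ∀ x : H, γ (γ x) = x)
    (hDγ : ∀ x : H, D (γ x) = -γ (D x))
    (hJJ : ∀ x : H, J (J x) = ε • x)
    (hDJ : ∀ x : H, D (J x) = ε' • J (D x))
    (hJγ : ∀ x : H, J (γ x) = ε'' • γ (J x)) :
    Function.Bijective (fun x : H => J (γ x)) ∧
    (∀ x y : H, J (γ (x + y)) = J (γ x) + J (γ y)) ∧
    (∀ (c : ℂ) (x : H), J (γ (c • x)) = (starRingEnd ℂ) c • J (γ x)) ∧
    (∀ x : H, J (γ (J (γ x))) = (ε * ε'') • x) ∧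
    (∀ x : H, D (J (γ x)) = (-ε') • J (γ (D x))) ∧
    (∀ x : H, J (γ (γ x)) = ε'' • γ (J (γ x))) := by
  have hγbij : Function.Bijective γ :=
    Function.bijective_iff_has_inverse.2 ⟨γ, hγγ, hγγ⟩
  have hJneg : ∀ x : H, J (-x) = -J x := by
    intro x
    have := hJconj (-1) x
    simpa using this
  refine ⟨hJbij.comp hγbij, ?_, ?_, ?_, ?_, ?_⟩
  · intro x y; rw [map_add, hJadd]
  · intro c x; rw [map_smul, hJconj]
  · intro x
    rw [hJγ (J (γ x)), hJJ, map_smul, hγγ, smul_smul, mul_comm]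
  · intro x
    rw [hDJ, hDγ, hJneg, smul_neg, neg_smul]
  · intro x
    have h2 : ε'' * ε'' = 1 := by rcases hε'' with h | h <;> simp [h]
    rw [hJγ]
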